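/- For every countable ordinal α, the set S_α of models of P in the model-intersection construction is non-empty. -/

import Mathlib

open Ordinal Set

noncomputable section
attribute [local instance] Classical.propDecidable

namespace IVS

/-- Countable ordinals: ordinals below `ω₁`. -/
abbrev Ord1 := {o : Ordinal.{0} // o < ω₁}

theorem zero_lt_omega1 : (0 : Ordinal) < ω₁ := omega_pos 1

theorem succ_lt_omega1 {o : Ordinal} (h : o < ω₁) : o + 1 < ω₁ := by
  have : Order.succ o < ω₁ := by
    first
    | exact (Ordinal.isSuccLimit_omega 1).succ_lt h
    | exact (Cardinal.isSuccLimit_omega 1).succ_lt h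
  rwa [Order.succ_eq_add_one] at this

/-- zero as a countable ordinal -/
def O0 : Ord1 := ⟨0, zero_lt_omega1⟩

/-- successor on countable ordinals -/
def Ord1.succ (a : Ord1) : Ord1 := ⟨a.1 + 1, succ_lt_omega1 a.2⟩

/-- The truth domain `V`: `F_α < ⋯ < 0 < ⋯ < T_α` realized as a lexicographic sum. -/
abbrev TV := Ord1 ⊕ₗ (Unit ⊕ₗ Ord1ᵒᵈ)

/-- the false value `F_α` -/
def TV.F (a : Ord1) : TV := toLex (Sum.inl a)
/-- the middle value `0` -/
def TV.Z : TV := toLex (Sum.inr (toLex (Sum.inl ())))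
/-- the true value `T_α` -/
def TV.T (a : Ord1) : TV := toLex (Sum.inr (toLex (Sum.inr (OrderDual.toDual a))))

/-- the order of a truth value (`⊤` codes `+∞`, the order of `0`) -/
def ordOf (v : TV) : WithTop Ordinal :=
  match ofLex v with
  | .inl a => (a.1 : Ordinal)
  | .inr b =>
    match ofLex b with
    | .inl _ => ⊤
    | .inr a => ((OrderDual.ofDual a).1 : Ordinal)

/-- negation-as-failure: `¬F_α = T_{α+1}`, `¬T_α = F_{α+1}`, `¬0 = 0`. -/
def negv (v : TV) : TV :=
  match ofLex v with
  | .inl a => TV.T a.succ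
  | .inr b =>
    match ofLex b with
    | .inl _ => TV.Z
    | .inr a => TV.F (OrderDual.ofDual a).succ

/-- Literals of a propositional normal program (atoms are natural numbers). -/
inductive Lit where
  | pos (n : ℕ)
  | neg (n : ℕ)
  | tt
  | ff

/-- A normal program clause: a head atom and a body which is a conjunction of literals. -/
structure Clause where
  head : ℕ
  body : List Lit

/-- A (possibly infinite) propositional normal logic program. -/
abbrev Program := Set Clause

/-- Infinite-valued interpretations. -/
abbrev Interp := ℕ → TV

/-- the interpretation assigning `F₀` to every atom (denoted `∅` in the paper) -/
def botI : Interp := fun _ => TV.F O0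

def evalLit (I : Interp) : Lit → TV
  | .pos n => I n
  | .neg n => negv (I n)
  | .tt => TV.T O0
  | .ff => TV.F O0

/-- value of a body (conjunction evaluated by `min`; empty conjunction is `T₀`) -/
def evalBody (I : Interp) (b : List Lit) : TV :=
  (b.map (evalLit I)).foldr min (TV.T O0)

/-- least upper bound in `V` (well-defined by the lub-existence theorem) -/
def lub (S : Set TV) : TV := if h : ∃ v, IsLUB S v then h.choose else TV.Z

/-- the immediate consequence operator -/
def TP (P : Program) (I : Interp) : Interp :=
  fun p => lub {v | ∃ c ∈ P, c.head = p ∧ evalBody I c.body = v}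

/-- `I` is an (infinite-valued) model of `P` -/
def isModel (P : Program) (I : Interp) : Prop :=
  ∀ c ∈ P, evalBody I c.body ≤ I c.head

/-- the level set `I ∥ v` -/
def level (I : Interp) (v : TV) : Set ℕ := {p | I p = v}

/-- `I =_α J` -/
def eqA (α : Ord1) (I J : Interp) : Prop :=
  ∀ β ≤ α, level I (TV.T β) = level J (TV.T β) ∧ level I (TV.F β) = level J (TV.F β)

/-- `I ⊏_α J` -/
def sqltA (α : Ord1) (I J : Interp) : Prop :=
  (∀ β < α, eqA β I J) ∧
    ((level I (TV.T α) ⊂ level J (TV.T α) ∧ level J (TV.F α) ⊆ level I (TV.F α)) ∨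
     (level I (TV.T α) ⊆ level J (TV.T α) ∧ level J (TV.F α) ⊂ level I (TV.F α)))

/-- `I ⊑_α J` -/
def sqleA (α : Ord1) (I J : Interp) : Prop := eqA α I J ∨ sqltA α I J

/-- `I ⊏_∞ J` -/
def sqltInf (I J : Interp) : Prop := ∃ α : Ord1, sqltA α I J

/-- `I ⊑_∞ J` -/
def sqleInf (I J : Interp) : Prop := I = J ∨ sqltInf I J

/-- the sequence `T_P^n(I)` is an `α`-chain -/
def isChainA (P : Program) (α : Ord1) (I : Interp) : Prop :=
  ∀ n : ℕ, sqleA α ((TP P)^[n] I) ((TP P)^[n + 1] I)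

/-- the interpretation `T_{P,α}^ω(I)` -/
def TPomega (P : Program) (α : Ord1) (I : Interp) : Interp := fun p =>
  if ordOf (I p) < (α.1 : WithTop Ordinal) then I p
  else if ∃ n : ℕ, (TP P)^[n] I p = TV.T α then TV.T α
  else if ∀ n : ℕ, (TP P)^[n] I p = TV.F α then TV.F α
  else TV.F α.succ

/-- `⊔_{β<α} M_β` for a family defined below `α` -/
def sqcupI (α : Ord1) (f : ∀ β : Ordinal, β < α.1 → Interp) : Interp := fun p =>
  if h : ∃ β : Ordinal, ∃ hb : β < α.1, ordOf (f β hb p) = (β : WithTop Ordinal)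
  then f h.choose h.choose_spec.choose p
  else TV.F α

/-- the approximations `M_α` to the minimum model (junk values for `α ≥ ω₁`) -/
def MA (P : Program) (o : Ordinal) : Interp :=
  Ordinal.limitRecOn o
    (TPomega P O0 botI)
    (fun o' ih => if h : o' + 1 < ω₁ then TPomega P ⟨o' + 1, h⟩ ih else ih)
    (fun o' _ ih =>
      if h : o' < ω₁ then TPomega P ⟨o', h⟩ (sqcupI ⟨o', h⟩ ih) else botI)

/-- `M_α` for a countable ordinal `α` -/
def Mα (P : Program) (α : Ord1) : Interp := MA P α.1

/-- the defining property of the depth `δ` of a program -/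
def isDepth (P : Program) (δ : Ord1) : Prop :=
  (level (Mα P δ) (TV.T δ) = ∅ ∧ level (Mα P δ) (TV.F δ) = ∅) ∧
    ∀ β : Ord1, β < δ →
      (level (Mα P β) (TV.T β) ≠ ∅ ∨ level (Mα P β) (TV.F β) ≠ ∅)

/-- the depth of a program -/
def depth (P : Program) : Ord1 :=
  if h : ∃ δ : Ord1, isDepth P δ then h.choose else O0

/-- the minimum model `M_P` -/
def MP (P : Program) : Interp := fun p =>
  if ordOf (Mα P (depth P) p) < ((depth P).1 : WithTop Ordinal)
  then Mα P (depth P) p else TV.Z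

/-- the set of all infinite-valued models of `P` -/
def models (P : Program) : Set Interp := {I | isModel P I}

/-- `M ♯ α`: the part of `M` consisting of values of order `α` -/
def sharp (I : Interp) (α : Ord1) : Set (ℕ × TV) :=
  {pv | I pv.1 = pv.2 ∧ ordOf pv.2 = (α.1 : WithTop Ordinal)}

/-- `⨀^α S = ⋀^α S ∪ ⋁^α S` -/
def odot (α : Ord1) (S : Set Interp) : Set (ℕ × TV) :=
  {pv | (∃ p : ℕ, pv = (p, TV.T α) ∧ ∀ M ∈ S, M p = TV.T α) ∨
        (∃ p : ℕ, pv = (p, TV.F α) ∧ ∃ M ∈ S, M p = TV.F α)}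

/-- the sets `S_α` of the model intersection construction (junk for `α ≥ ω₁`) -/
def SA (P : Program) (o : Ordinal) : Set Interp :=
  Ordinal.limitRecOn o
    {M ∈ models P | sharp M O0 = odot O0 (models P)}
    (fun o' ih =>
      if h : o' + 1 < ω₁ then {M ∈ ih | sharp M ⟨o' + 1, h⟩ = odot ⟨o' + 1, h⟩ ih} else ih)
    (fun o' _ ih =>
      if h : o' < ω₁ then
        {M : Interp | M ∈ (⋂ (b : Ordinal) (hb : b < o'), ih b hb) ∧
          sharp M ⟨o', h⟩ = odot ⟨o', h⟩ (⋂ (b : Ordinal) (hb : b < o'), ih b hb)}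
      else ∅)


-- basic TV order lemmas
theorem TV.F_lt_F {a b : Ord1} : TV.F a < TV.F b ↔ a < b := Sum.Lex.inl_lt_inl_iff

theorem TV.T_lt_T {a b : Ord1} : TV.T a < TV.T b ↔ b < a := by
  show toLex (Sum.inr _) < toLex (Sum.inr _) ↔ _
  rw [Sum.Lex.inr_lt_inr_iff]
  exact Sum.Lex.inr_lt_inr_iff

theorem TV.T_le_T {a b : Ord1} : TV.T a ≤ TV.T b ↔ b ≤ a := by
  show toLex (Sum.inr _) ≤ toLex (Sum.inr _) ↔ _
  rw [Sum.Lex.inr_le_inr_iff]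
  exact Sum.Lex.inr_le_inr_iff

theorem TV.F_lt_T {a b : Ord1} : TV.F a < TV.T b := Sum.Lex.inl_lt_inr _ _
theorem TV.F_lt_Z {a : Ord1} : TV.F a < TV.Z := Sum.Lex.inl_lt_inr _ _
theorem TV.Z_lt_T {a : Ord1} : TV.Z < TV.T a := by
  show toLex (Sum.inr _) < toLex (Sum.inr _)
  rw [Sum.Lex.inr_lt_inr_iff]
  exact Sum.Lex.inl_lt_inr _ _

theorem TV.T_ne_F {a b : Ord1} : TV.T a ≠ TV.F b := by
  intro h; exact Sum.inr_ne_inl (congrArg ofLex h)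

theorem TV.T_inj {a b : Ord1} (h : TV.T a = TV.T b) : a = b := by
  have := congrArg ofLex h
  have := Sum.inr_injective this
  have := congrArg ofLex this
  exact OrderDual.toDual.injective (Sum.inr_injective this)

theorem TV.F_inj {a b : Ord1} (h : TV.F a = TV.F b) : a = b :=
  Sum.inl_injective (congrArg ofLex h)

theorem Ord1.bot_le (a : Ord1) : O0 ≤ a := by
  show (0:Ordinal) ≤ a.1
  exact zero_le
theorem TV.cases (v : TV) : (∃ a, v = TV.F a) ∨ v = TV.Z ∨ ∃ a, v = TV.T a := by
  rcases v with a | (u | a)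
  · exact Or.inl ⟨a, rfl⟩
  · exact Or.inr (Or.inl rfl)
  · exact Or.inr (Or.inr ⟨a, rfl⟩)

theorem TV.Z_ne_F {b : Ord1} : TV.Z ≠ TV.F b := by
  intro h; exact Sum.inr_ne_inl (congrArg ofLex h)

theorem TV.Z_ne_T {b : Ord1} : TV.Z ≠ TV.T b := by
  intro h
  have := Sum.inr_injective (congrArg ofLex h)
  exact Sum.inl_ne_inr (congrArg ofLex this)

theorem TV.le_F_iff {v : TV} {b : Ord1} : v ≤ TV.F b ↔ ∃ c ≤ b, v = TV.F c := by
  constructor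
  · intro h
    rcases TV.cases v with ⟨a, rfl⟩ | rfl | ⟨a, rfl⟩
    · exact ⟨a, by simpa using (Sum.Lex.inl_le_inl_iff.1 h), rfl⟩
    · exact absurd h (not_le.2 TV.F_lt_Z)
    · exact absurd h (not_le.2 TV.F_lt_T)
  · rintro ⟨c, hc, rfl⟩
    exact Sum.Lex.inl_le_inl_iff.2 hc

theorem TV.T_le_iff {v : TV} {b : Ord1} : TV.T b ≤ v ↔ ∃ c ≤ b, v = TV.T c := by
  constructor
  · intro h
    rcases TV.cases v with ⟨a, rfl⟩ | rfl | ⟨a, rfl⟩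
    · exact absurd h (not_le.2 TV.F_lt_T)
    · exact absurd h (not_le.2 TV.Z_lt_T)
    · exact ⟨a, TV.T_le_T.1 h, rfl⟩
  · rintro ⟨c, hc, rfl⟩
    exact TV.T_le_T.2 hc

theorem TV.T_lt_iff {v : TV} {b : Ord1} : TV.T b < v ↔ ∃ c < b, v = TV.T c := by
  constructor
  · intro h
    rcases TV.cases v with ⟨a, rfl⟩ | rfl | ⟨a, rfl⟩
    · exact absurd h (not_lt.2 TV.F_lt_T.le)
    · exact absurd h (not_lt.2 TV.Z_lt_T.le)
    · exact ⟨a, TV.T_lt_T.1 h, rfl⟩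
  · rintro ⟨c, hc, rfl⟩
    exact TV.T_lt_T.2 hc

theorem TV.le_T0 (v : TV) : v ≤ TV.T O0 := by
  rcases TV.cases v with ⟨a, rfl⟩ | rfl | ⟨a, rfl⟩
  · exact TV.F_lt_T.le
  · exact TV.Z_lt_T.le
  · exact TV.T_le_T.2 (Ord1.bot_le a)

theorem TV.F0_le (v : TV) : TV.F O0 ≤ v := by
  rcases TV.cases v with ⟨a, rfl⟩ | rfl | ⟨a, rfl⟩
  · exact Sum.Lex.inl_le_inl_iff.2 (Ord1.bot_le a)
  · exact TV.F_lt_Z.le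
  · exact TV.F_lt_T.le
theorem negv_T (a : Ord1) : negv (TV.T a) = TV.F a.succ := rfl
theorem negv_F (a : Ord1) : negv (TV.F a) = TV.T a.succ := rfl
theorem negv_Z : negv TV.Z = TV.Z := rfl

theorem negv_eq_F {v : TV} {c : Ord1} (h : negv v = TV.F c) :
    ∃ a, v = TV.T a ∧ c = a.succ := by
  rcases TV.cases v with ⟨a, rfl⟩ | rfl | ⟨a, rfl⟩
  · exact absurd h TV.T_ne_F
  · exact absurd h TV.Z_ne_F
  · exact ⟨a, rfl, (TV.F_inj h).symm⟩

theorem negv_eq_T {v : TV} {c : Ord1} (h : negv v = TV.T c) :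
    ∃ a, v = TV.F a ∧ c = a.succ := by
  rcases TV.cases v with ⟨a, rfl⟩ | rfl | ⟨a, rfl⟩
  · exact ⟨a, rfl, (TV.T_inj h).symm⟩
  · exact absurd h TV.Z_ne_T
  · exact absurd h.symm TV.T_ne_F

theorem ordOf_T (a : Ord1) : ordOf (TV.T a) = (a.1 : WithTop Ordinal) := rfl
theorem ordOf_F (a : Ord1) : ordOf (TV.F a) = (a.1 : WithTop Ordinal) := rfl
theorem ordOf_Z : ordOf TV.Z = ⊤ := rfl

theorem Ord1.eq_of_val_eq {a b : Ord1} (h : a.1 = b.1) : a = b := Subtype.ext h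

theorem ordOf_coe_inj {a b : Ord1} (h : (a.1 : WithTop Ordinal) = (b.1 : WithTop Ordinal)) :
    a = b := Ord1.eq_of_val_eq (WithTop.coe_inj.1 h)

/-- the values of order `b` are exactly `T b` and `F b` -/
theorem eq_T_or_F_of_ordOf {v : TV} {b : Ord1} (h : ordOf v = (b.1 : WithTop Ordinal)) :
    v = TV.T b ∨ v = TV.F b := by
  rcases TV.cases v with ⟨a, rfl⟩ | rfl | ⟨a, rfl⟩
  · obtain rfl := ordOf_coe_inj (a := a) (b := b) h
    exact Or.inr rfl
  · exact absurd h.symm (by simp [ordOf_Z])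
  · obtain rfl := ordOf_coe_inj (a := a) (b := b) h
    exact Or.inl rfl
theorem tv_min_le_iff {a b c : TV} : min a b ≤ c ↔ a ≤ c ∨ b ≤ c := by
  show a ⊓ b ≤ c ↔ _
  rcases le_total a b with h | h
  · rw [inf_eq_left.2 h]
    exact ⟨Or.inl, fun hc => hc.elim id fun hbc => le_trans h hbc⟩
  · rw [inf_eq_right.2 h]
    exact ⟨Or.inr, fun hc => hc.elim (fun hac => le_trans h hac) id⟩

theorem tv_lt_min_iff {a b c : TV} : a < min b c ↔ a < b ∧ a < c := by
  show a < b ⊓ c ↔ _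
  constructor
  · intro h
    exact ⟨lt_of_lt_of_le h inf_le_left, lt_of_lt_of_le h inf_le_right⟩
  · rintro ⟨h1, h2⟩
    rcases le_total b c with h | h
    · rwa [inf_eq_left.2 h]
    · rwa [inf_eq_right.2 h]

theorem foldr_min_le_iff {l : List TV} {i v : TV} :
    l.foldr min i ≤ v ↔ i ≤ v ∨ ∃ x ∈ l, x ≤ v := by
  induction l with
  | nil => simp
  | cons a t ih =>
    simp only [List.foldr_cons, tv_min_le_iff, ih, List.mem_cons]
    constructor
    · rintro (h | h | ⟨x, hx, hxv⟩)
      · exact Or.inr ⟨a, Or.inl rfl, h⟩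
      · exact Or.inl h
      · exact Or.inr ⟨x, Or.inr hx, hxv⟩
    · rintro (h | ⟨x, rfl | hx, hxv⟩)
      · exact Or.inr (Or.inl h)
      · exact Or.inl hxv
      · exact Or.inr (Or.inr ⟨x, hx, hxv⟩)

theorem lt_foldr_min_iff {l : List TV} {i v : TV} :
    v < l.foldr min i ↔ v < i ∧ ∀ x ∈ l, v < x := by
  induction l with
  | nil => simp
  | cons a t ih =>
    simp only [List.foldr_cons, tv_lt_min_iff, ih, List.mem_cons]
    constructor
    · rintro ⟨ha, hi, ht⟩
      exact ⟨hi, fun x hx => hx.elim (fun h => h ▸ ha) (ht x)⟩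
    · rintro ⟨hi, h⟩
      exact ⟨h a (Or.inl rfl), hi, fun x hx => h x (Or.inr hx)⟩

theorem evalBody_le_iff {I : Interp} {b : List Lit} {v : TV} :
    evalBody I b ≤ v ↔ TV.T O0 ≤ v ∨ ∃ x ∈ b, evalLit I x ≤ v := by
  unfold evalBody
  rw [foldr_min_le_iff]
  simp

theorem lt_evalBody_iff {I : Interp} {b : List Lit} {v : TV} :
    v < evalBody I b ↔ v < TV.T O0 ∧ ∀ x ∈ b, v < evalLit I x := by
  unfold evalBody
  rw [lt_foldr_min_iff]
  simp
variable {P : Program}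

theorem SA_zero : SA P 0 = {M ∈ models P | sharp M O0 = odot O0 (models P)} :=
  Ordinal.limitRecOn_zero _ _ _

theorem SA_succ (o : Ordinal) (h : o + 1 < ω₁) :
    SA P (o + 1) = {M ∈ SA P o | sharp M ⟨o + 1, h⟩ = odot ⟨o + 1, h⟩ (SA P o)} := by
  unfold SA
  conv_lhs => rw [Ordinal.add_one_eq_succ, Ordinal.limitRecOn_succ]
  rw [dif_pos h]

theorem SA_limit (o : Ordinal) (ho : Order.IsSuccLimit o) (h : o < ω₁) :
    SA P o = {M : Interp | M ∈ (⋂ (b : Ordinal) (_ : b < o), SA P b) ∧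
      sharp M ⟨o, h⟩ = odot ⟨o, h⟩ (⋂ (b : Ordinal) (_ : b < o), SA P b)} := by
  unfold SA
  rw [Ordinal.limitRecOn_limit _ _ _ _ ho, dif_pos h]
theorem SA_succ_junk (o : Ordinal) (h : ¬ o + 1 < ω₁) : SA P (o + 1) = SA P o := by
  unfold SA
  conv_lhs => rw [Ordinal.add_one_eq_succ, Ordinal.limitRecOn_succ]
  rw [dif_neg h]

theorem SA_limit_junk (o : Ordinal) (ho : Order.IsSuccLimit o) (h : ¬ o < ω₁) : SA P o = ∅ := by
  unfold SA
  rw [Ordinal.limitRecOn_limit _ _ _ _ ho, dif_neg h]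

theorem SA_antitone : ∀ {o c : Ordinal}, c < o → SA P o ⊆ SA P c := by
  intro o
  induction o using Ordinal.induction with
  | h o IH =>
    intro c hc
    rcases Ordinal.zero_or_succ_or_isSuccLimit o with rfl | ⟨a, rfl⟩ | ho
    · exact absurd hc ((not_lt.2 (show (0:Ordinal) ≤ c from zero_le)))
    · rw [← Ordinal.add_one_eq_succ] at hc ⊢
      have hca : c ≤ a := by
        rw [Ordinal.add_one_eq_succ] at hc
        exact Order.lt_succ_iff.1 hc
      have step : SA P (a + 1) ⊆ SA P a := by
        by_cases h : a + 1 < ω₁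
        · rw [SA_succ a h]; exact fun M hM => hM.1
        · rw [SA_succ_junk a h]
      rcases eq_or_lt_of_le hca with rfl | hlt
      · exact step
      · exact fun M hM => IH a (Order.lt_succ a) hlt (step hM)
    · by_cases h : o < ω₁
      · rw [SA_limit o ho h]
        intro M hM
        exact Set.mem_iInter.1 (Set.mem_iInter.1 hM.1 c) hc
      · rw [SA_limit_junk o ho h]
        exact fun M hM => absurd hM (Set.notMem_empty M)

/-- the set from which `S_α` is carved out: `models P` at 0, `⋂_{β<α} S_β` otherwise -/
def PreS (P : Program) (o : Ordinal) : Set Interp :=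
  if o = 0 then models P else ⋂ (b : Ordinal) (_ : b < o), SA P b

theorem PreS_zero : PreS P 0 = models P := if_pos rfl

theorem PreS_succ (a : Ordinal) : PreS P (a + 1) = SA P a := by
  rw [PreS, if_neg (by rw [Ordinal.add_one_eq_succ]; exact (Order.succ_ne_bot a))]
  ext M
  simp only [Set.mem_iInter]
  constructor
  · intro h
    exact h a (by rw [Ordinal.add_one_eq_succ]; exact Order.lt_succ a)
  · intro h b hb
    have hba : b ≤ a := by
      rw [Ordinal.add_one_eq_succ] at hb
      exact Order.lt_succ_iff.1 hb
    rcases eq_or_lt_of_le hba with rfl | hlt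
    · exact h
    · exact SA_antitone hlt h

theorem SA_eq (o : Ordinal) (h : o < ω₁) :
    SA P o = {M | M ∈ PreS P o ∧ sharp M ⟨o, h⟩ = odot ⟨o, h⟩ (PreS P o)} := by
  rcases Ordinal.zero_or_succ_or_isSuccLimit o with rfl | ⟨a, rfl⟩ | ho
  · rw [SA_zero, PreS_zero]; rfl
  · revert h
    rw [← Ordinal.add_one_eq_succ]
    intro h
    rw [SA_succ a h, PreS_succ a]
  · have ho0 : o ≠ 0 := ho.pos.ne'
    rw [SA_limit o ho h, PreS, if_neg ho0]

theorem SA_subset_PreS (o : Ordinal) (h : o < ω₁) : SA P o ⊆ PreS P o := by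
  rw [SA_eq o h]; exact fun M hM => hM.1

theorem PreS_subset_SA {c o : Ordinal} (hco : c < o) : PreS P o ⊆ SA P c := by
  rw [PreS, if_neg (by intro h; rw [h] at hco; exact (not_lt.2 (show (0:Ordinal) ≤ c from zero_le)) hco)]
  intro M hM
  exact Set.mem_iInter.1 (Set.mem_iInter.1 hM c) hco

theorem PreS_subset_models (o : Ordinal) : PreS P o ⊆ models P := by
  rcases eq_or_ne o 0 with rfl | h
  · rw [PreS_zero]
  · have h0 : (0:Ordinal) < o := pos_iff_ne_zero.2 h
    refine subset_trans (PreS_subset_SA h0) ?_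
    rw [← PreS_zero (P := P)]
    exact SA_subset_PreS 0 zero_lt_omega1

theorem PreS_antitone {c o : Ordinal} (hco : c ≤ o) : PreS P o ⊆ PreS P c := by
  rcases eq_or_lt_of_le hco with rfl | hlt
  · exact subset_rfl
  · rcases eq_or_ne c 0 with rfl | hc
    · rw [PreS_zero]; exact PreS_subset_models o
    · have ho : o ≠ 0 := fun h => ((not_lt.2 (show (0:Ordinal) ≤ c from zero_le)) (h ▸ hlt)).elim
      rw [PreS, PreS, if_neg ho, if_neg hc]
      intro M hM
      exact Set.mem_iInter.2 fun b => Set.mem_iInter.2 fun hb =>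
        Set.mem_iInter.1 (Set.mem_iInter.1 hM b) (hb.trans hlt)
/-- atoms forced to `T_g` by all elements of the previous stage -/
def Av (P : Program) (g : Ord1) : Set ℕ := {p | ∀ M ∈ PreS P g.1, M p = TV.T g}
/-- atoms taking value `F_g` in some element of the previous stage -/
def Bv (P : Program) (g : Ord1) : Set ℕ := {p | ∃ M ∈ PreS P g.1, M p = TV.F g}

theorem odot_PreS (g : Ord1) :
    odot g (PreS P g.1) =
      {pv | (∃ p, pv = (p, TV.T g) ∧ p ∈ Av P g) ∨ (∃ p, pv = (p, TV.F g) ∧ p ∈ Bv P g)} := rfl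

theorem sharp_cond_of_mem_SA {M : Interp} {g : Ord1} (hM : M ∈ SA P g.1) :
    sharp M g = odot g (PreS P g.1) := by
  have := (SA_eq g.1 g.2 ▸ hM : M ∈ {M | M ∈ PreS P g.1 ∧
    sharp M ⟨g.1, g.2⟩ = odot ⟨g.1, g.2⟩ (PreS P g.1)})
  exact this.2

theorem mem_SA_T {M : Interp} {g : Ord1} {q : ℕ} (hM : M ∈ SA P g.1) (hq : q ∈ Av P g) :
    M q = TV.T g := by
  have h : ((q, TV.T g) : ℕ × TV) ∈ odot g (PreS P g.1) := Or.inl ⟨q, rfl, hq⟩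
  rw [← sharp_cond_of_mem_SA hM] at h
  exact h.1

theorem mem_SA_F {M : Interp} {g : Ord1} {q : ℕ} (hM : M ∈ SA P g.1) (hq : q ∈ Bv P g) :
    M q = TV.F g := by
  have h : ((q, TV.F g) : ℕ × TV) ∈ odot g (PreS P g.1) := Or.inr ⟨q, rfl, hq⟩
  rw [← sharp_cond_of_mem_SA hM] at h
  exact h.1

theorem Av_of_mem_SA {M : Interp} {g : Ord1} {q : ℕ} (hM : M ∈ SA P g.1)
    (h : M q = TV.T g) : q ∈ Av P g := by
  have hs : ((q, TV.T g) : ℕ × TV) ∈ sharp M g := ⟨h, ordOf_T g⟩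
  rw [sharp_cond_of_mem_SA hM] at hs
  rcases hs with ⟨p, hpv, hA⟩ | ⟨p, hpv, _⟩
  · obtain ⟨rfl, -⟩ := Prod.mk.injEq .. ▸ hpv
    exact hA
  · exact absurd (congrArg Prod.snd hpv) TV.T_ne_F

theorem Bv_of_mem_SA {M : Interp} {g : Ord1} {q : ℕ} (hM : M ∈ SA P g.1)
    (h : M q = TV.F g) : q ∈ Bv P g := by
  have hs : ((q, TV.F g) : ℕ × TV) ∈ sharp M g := ⟨h, ordOf_F g⟩
  rw [sharp_cond_of_mem_SA hM] at hs
  rcases hs with ⟨p, hpv, _⟩ | ⟨p, hpv, hB⟩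
  · exact absurd (congrArg Prod.snd hpv).symm TV.T_ne_F
  · obtain ⟨rfl, -⟩ := Prod.mk.injEq .. ▸ hpv
    exact hB
theorem ord_lt_add_one (o : Ordinal) : o < o + 1 := by
  rw [Ordinal.add_one_eq_succ]; exact Order.lt_succ o

theorem AB_disjoint {g : Ord1} {q : ℕ} (hA : q ∈ Av P g) (hB : q ∈ Bv P g) : False := by
  obtain ⟨M, hM, hMq⟩ := hB
  exact TV.T_ne_F ((hA M hM).symm.trans hMq)

theorem levels_unique {α : Ord1} (Hne : ∀ b : Ordinal, b < α.1 → (PreS P b).Nonempty)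
    {g d : Ord1} (hg : g.1 < α.1) (hd : d.1 < α.1) {q : ℕ}
    (h1 : q ∈ Av P g ∨ q ∈ Bv P g) (h2 : q ∈ Av P d ∨ q ∈ Bv P d) : g = d := by
  -- it suffices to rule out g.1 < d.1 (and symmetrically)
  have key : ∀ g d : Ord1, g.1 < d.1 → d.1 < α.1 →
      (q ∈ Av P g ∨ q ∈ Bv P g) → (q ∈ Av P d ∨ q ∈ Bv P d) → False := by
    intro g d hgd hdα h1 h2
    rcases h2 with h2 | h2
    · obtain ⟨N, hN⟩ := Hne d.1 hdα
      have hNd : N q = TV.T d := h2 N hN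
      have hNg : N ∈ SA P g.1 := PreS_subset_SA hgd hN
      rcases h1 with h1 | h1
      · have hgq := mem_SA_T hNg h1
        rw [hNd] at hgq
        have hdg : d = g := TV.T_inj hgq
        rw [hdg] at hgd
        exact lt_irrefl _ hgd
      · exact TV.T_ne_F ((mem_SA_F hNg h1).symm.trans hNd).symm
    · obtain ⟨M, hM, hMq⟩ := h2
      have hMg : M ∈ SA P g.1 := PreS_subset_SA hgd hM
      rcases h1 with h1 | h1
      · exact TV.T_ne_F ((mem_SA_T hMg h1).symm.trans hMq)
      · have := mem_SA_F hMg h1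
        rw [hMq] at this
        have : d = g := TV.F_inj this
        rw [this] at hgd
        exact lt_irrefl _ hgd
  rcases lt_trichotomy g.1 d.1 with h | h | h
  · exact absurd (key g d h hd h1 h2) id
  · exact Subtype.ext h
  · exact absurd (key d g h hg h2 h1) id

/-- the canonical witness interpretation for stage `α` -/
def Vit (P : Program) (α : Ord1) : Interp := fun p =>
  if h : ∃ g : Ord1, g.1 < α.1 ∧ (p ∈ Av P g ∨ p ∈ Bv P g) then
    if p ∈ Av P h.choose then TV.T h.choose else TV.F h.choose
  else TV.T α

theorem Vit_A {α : Ord1} (Hne : ∀ b : Ordinal, b < α.1 → (PreS P b).Nonempty)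
    {g : Ord1} (hg : g.1 < α.1) {q : ℕ} (hq : q ∈ Av P g) : Vit P α q = TV.T g := by
  have h : ∃ g : Ord1, g.1 < α.1 ∧ (q ∈ Av P g ∨ q ∈ Bv P g) := ⟨g, hg, Or.inl hq⟩
  have hc := h.choose_spec
  have he : h.choose = g := levels_unique Hne hc.1 hg hc.2 (Or.inl hq)
  rw [Vit, dif_pos h, he, if_pos hq]

theorem Vit_B {α : Ord1} (Hne : ∀ b : Ordinal, b < α.1 → (PreS P b).Nonempty)
    {g : Ord1} (hg : g.1 < α.1) {q : ℕ} (hq : q ∈ Bv P g) : Vit P α q = TV.F g := by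
  have h : ∃ g : Ord1, g.1 < α.1 ∧ (q ∈ Av P g ∨ q ∈ Bv P g) := ⟨g, hg, Or.inr hq⟩
  have hc := h.choose_spec
  have he : h.choose = g := levels_unique Hne hc.1 hg hc.2 (Or.inr hq)
  rw [Vit, dif_pos h, he, if_neg (fun hA => AB_disjoint hA hq)]

theorem Vit_default {α : Ord1} {q : ℕ}
    (h : ¬ ∃ g : Ord1, g.1 < α.1 ∧ (q ∈ Av P g ∨ q ∈ Bv P g)) : Vit P α q = TV.T α :=
  dif_neg h

/-- inversion for values of `Vit` -/
theorem Vit_cases {α : Ord1} (Hne : ∀ b : Ordinal, b < α.1 → (PreS P b).Nonempty) (q : ℕ) :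
    (∃ g : Ord1, g.1 < α.1 ∧
      ((q ∈ Av P g ∧ Vit P α q = TV.T g) ∨ (q ∈ Bv P g ∧ Vit P α q = TV.F g))) ∨
    (Vit P α q = TV.T α ∧ ∀ g : Ord1, g.1 < α.1 → q ∉ Av P g ∧ q ∉ Bv P g) := by
  by_cases h : ∃ g : Ord1, g.1 < α.1 ∧ (q ∈ Av P g ∨ q ∈ Bv P g)
  · obtain ⟨g, hg, hq⟩ := h
    rcases hq with hq | hq
    · exact Or.inl ⟨g, hg, Or.inl ⟨hq, Vit_A Hne hg hq⟩⟩
    · exact Or.inl ⟨g, hg, Or.inr ⟨hq, Vit_B Hne hg hq⟩⟩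
  · refine Or.inr ⟨Vit_default h, fun g hg => ⟨fun hA => h ⟨g, hg, Or.inl hA⟩,
      fun hB => h ⟨g, hg, Or.inr hB⟩⟩⟩

/-- if `Vit` gives `T g` then `q ∈ Av g` (or `g = α`) -/
theorem Vit_T_inv {α : Ord1} (Hne : ∀ b : Ordinal, b < α.1 → (PreS P b).Nonempty)
    {q : ℕ} {g : Ord1} (h : Vit P α q = TV.T g) (hg : g.1 < α.1) : q ∈ Av P g := by
  rcases Vit_cases Hne q with ⟨d, hd, ⟨hA, hv⟩ | ⟨hB, hv⟩⟩ | ⟨hv, -⟩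
  · rw [h] at hv; rwa [TV.T_inj hv]
  · rw [h] at hv; exact absurd hv TV.T_ne_F
  · rw [h] at hv
    have := TV.T_inj hv
    rw [← this] at hg
    exact absurd hg (lt_irrefl _)

theorem Vit_F_inv {α : Ord1} (Hne : ∀ b : Ordinal, b < α.1 → (PreS P b).Nonempty)
    {q : ℕ} {g : Ord1} (h : Vit P α q = TV.F g) : q ∈ Bv P g ∧ g.1 < α.1 := by
  rcases Vit_cases Hne q with ⟨d, hd, ⟨hA, hv⟩ | ⟨hB, hv⟩⟩ | ⟨hv, -⟩
  · rw [h] at hv; exact absurd hv.symm TV.T_ne_F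
  · rw [h] at hv
    obtain rfl := TV.F_inj hv
    exact ⟨hB, hd⟩
  · rw [h] at hv; exact absurd hv.symm TV.T_ne_F
theorem ord1_lt_iff {a b : Ord1} : a < b ↔ a.1 < b.1 := Subtype.coe_lt_coe.symm
theorem ord1_le_iff {a b : Ord1} : a ≤ b ↔ a.1 ≤ b.1 := Subtype.coe_le_coe.symm

/-- literal transfer from `Vit` to members of low-level stages -/
theorem lit_transfer {α : Ord1} (Hne : ∀ b : Ordinal, b < α.1 → (PreS P b).Nonempty)
    {x : Lit} {e : Ord1} (he : evalLit (Vit P α) x = TV.T e) (heα : e.1 < α.1)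
    {b : Ordinal} (heb : e.1 ≤ b) {N : Interp} (hN : N ∈ PreS P b) :
    evalLit N x = TV.T e := by
  cases x with
  | tt => exact he
  | ff => exact absurd he.symm TV.T_ne_F
  | pos n =>
    have hA : n ∈ Av P e := Vit_T_inv Hne he heα
    exact hA N (PreS_antitone heb hN)
  | neg n =>
    obtain ⟨a, hva, rfl⟩ := negv_eq_T he
    obtain ⟨hB, -⟩ := Vit_F_inv Hne hva
    have ha : a.1 < b := lt_of_lt_of_le (ord_lt_add_one a.1) heb
    have hNn : N n = TV.F a := mem_SA_F (PreS_subset_SA ha hN) hB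
    show negv (N n) = _
    rw [hNn, negv_F]

theorem list_bound {α : Ord1} (hα0 : (0:Ordinal) < α.1) (I : Interp) (l : List Lit)
    (H : ∀ x ∈ l, ∃ e : Ord1, e.1 < α.1 ∧ evalLit I x = TV.T e) :
    ∃ b : Ordinal, b < α.1 ∧ ∀ x ∈ l, ∀ e : Ord1, evalLit I x = TV.T e → e.1 ≤ b := by
  induction l with
  | nil => exact ⟨0, hα0, by simp⟩
  | cons a t ih =>
    obtain ⟨ea, hea, hva⟩ := H a (List.mem_cons_self)
    obtain ⟨b', hb', hball⟩ := ih fun x hx => H x (List.mem_cons_of_mem a hx)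
    refine ⟨max b' ea.1, max_lt hb' hea, ?_⟩
    intro x hx e hve
    rcases List.mem_cons.1 hx with rfl | hx
    · rw [hva] at hve
      rw [TV.T_inj hve.symm]
      exact le_max_right _ _
    · exact le_trans (hball x hx e hve) (le_max_left _ _)

theorem Vit_isModel (α : Ord1) (Hne : ∀ b : Ordinal, b < α.1 → (PreS P b).Nonempty) :
    Vit P α ∈ models P := by
  intro c hc
  rcases Vit_cases Hne c.head with ⟨g, hg, ⟨hA, hv⟩ | ⟨hB, hv⟩⟩ | ⟨hv, hdef⟩
  · -- head forced to T g
    rw [hv]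
    by_contra hlt'
    obtain ⟨h0, hx⟩ := lt_evalBody_iff.1 (not_le.1 hlt')
    obtain ⟨N, hN⟩ := Hne g.1 hg
    have hNbig : TV.T g < evalBody N c.body := by
      refine lt_evalBody_iff.2 ⟨h0, fun x hxb => ?_⟩
      obtain ⟨e, heg, hxe⟩ := TV.T_lt_iff.1 (hx x hxb)
      have heg' : e.1 < g.1 := ord1_lt_iff.1 heg
      rw [lit_transfer Hne hxe (heg'.trans hg) heg'.le hN]
      exact TV.T_lt_T.2 heg
    have hmod : evalBody N c.body ≤ N c.head := PreS_subset_models g.1 hN c hc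
    rw [hA N hN] at hmod
    exact absurd (lt_of_lt_of_le hNbig hmod) (lt_irrefl _)
  · -- head gets F g from a witness
    rw [hv]
    obtain ⟨M, hM, hMh⟩ := hB
    have hmod : evalBody M c.body ≤ M c.head := PreS_subset_models g.1 hM c hc
    rw [hMh] at hmod
    rcases evalBody_le_iff.1 hmod with h0 | ⟨x, hxb, hxle⟩
    · exact absurd h0 (not_le.2 TV.F_lt_T)
    obtain ⟨e, heg, hxe⟩ := TV.le_F_iff.1 hxle
    refine evalBody_le_iff.2 (Or.inr ⟨x, hxb, ?_⟩)
    cases x with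
    | tt => exact absurd hxe TV.T_ne_F
    | ff => exact TV.le_F_iff.2 ⟨O0, Ord1.bot_le g, rfl⟩
    | pos n =>
      have hBe : n ∈ Bv P e := ⟨M, PreS_antitone (ord1_le_iff.1 heg) hM, hxe⟩
      have : Vit P α n = TV.F e := Vit_B Hne (lt_of_le_of_lt (ord1_le_iff.1 heg) hg) hBe
      show Vit P α n ≤ TV.F g
      rw [this]
      exact TV.le_F_iff.2 ⟨e, heg, rfl⟩
    | neg n =>
      obtain ⟨a, hMn, rfl⟩ := negv_eq_F hxe
      have ha : a.1 < g.1 := lt_of_lt_of_le (ord_lt_add_one a.1) (ord1_le_iff.1 heg)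
      have hAa : n ∈ Av P a := Av_of_mem_SA (PreS_subset_SA ha hM) hMn
      have hVn : Vit P α n = TV.T a := Vit_A Hne (ha.trans hg) hAa
      show negv (Vit P α n) ≤ TV.F g
      rw [hVn, negv_T]
      exact TV.le_F_iff.2 ⟨a.succ, heg, rfl⟩
  · -- default head
    rw [hv]
    by_contra hlt'
    obtain ⟨h0, hx⟩ := lt_evalBody_iff.1 (not_le.1 hlt')
    have hα0 : (0:Ordinal) < α.1 := by
      have := TV.T_lt_T.1 h0
      exact ord1_lt_iff.1 this
    have hxE : ∀ x ∈ c.body, ∃ e : Ord1, e.1 < α.1 ∧ evalLit (Vit P α) x = TV.T e := by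
      intro x hxb
      obtain ⟨e, heα, hxe⟩ := TV.T_lt_iff.1 (hx x hxb)
      exact ⟨e, ord1_lt_iff.1 heα, hxe⟩
    obtain ⟨b, hbα, hball⟩ := list_bound hα0 _ c.body hxE
    set g : Ord1 := ⟨b, hbα.trans α.2⟩ with hgdef
    have key : ∀ N ∈ PreS P b, ∃ d : Ord1, d.1 ≤ b ∧ N c.head = TV.T d := by
      intro N hN
      have hmod : evalBody N c.body ≤ N c.head := PreS_subset_models b hN c hc
      rcases evalBody_le_iff.1 hmod with h0' | ⟨x, hxb, hxle⟩
      · obtain ⟨d, hd, hNh⟩ := TV.T_le_iff.1 h0'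
        exact ⟨d, le_trans (ord1_le_iff.1 hd) (show (0:Ordinal) ≤ b from zero_le), hNh⟩
      · obtain ⟨e, heα, hxe⟩ := hxE x hxb
        have heb : e.1 ≤ b := hball x hxb e hxe
        rw [lit_transfer Hne hxe heα heb hN] at hxle
        obtain ⟨d, hde, hNh⟩ := TV.T_le_iff.1 hxle
        exact ⟨d, le_trans (ord1_le_iff.1 hde) heb, hNh⟩
    by_cases hall : ∀ N ∈ PreS P b, N c.head = TV.T g
    · exact (hdef g hbα).1 hall
    · push_neg at hall
      obtain ⟨N, hN, hne⟩ := hall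
      obtain ⟨d, hdb, hNh⟩ := key N hN
      have hdb' : d.1 < b := lt_of_le_of_ne hdb fun h => hne (by
        rw [hNh]
        congr 1
        exact Subtype.ext h)
      have hhead : c.head ∈ Av P d := Av_of_mem_SA (PreS_subset_SA hdb' hN) hNh
      exact (hdef d (hdb'.trans hbα)).1 hhead
theorem Vit_sharp {α : Ord1} (Hne : ∀ b : Ordinal, b < α.1 → (PreS P b).Nonempty)
    {b : Ord1} (hb : b.1 < α.1) : sharp (Vit P α) b = odot b (PreS P b.1) := by
  ext pv
  obtain ⟨q, v⟩ := pv
  constructor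
  · rintro ⟨hv, ho⟩
    rcases eq_T_or_F_of_ordOf ho with rfl | rfl
    · exact Or.inl ⟨q, rfl, Vit_T_inv Hne hv hb⟩
    · exact Or.inr ⟨q, rfl, (Vit_F_inv Hne hv).1⟩
  · rintro (⟨p, hpv, hA⟩ | ⟨p, hpv, hB⟩)
    · obtain ⟨rfl, rfl⟩ := Prod.mk.injEq .. ▸ hpv
      exact ⟨Vit_A Hne hb hA, ordOf_T b⟩
    · obtain ⟨rfl, rfl⟩ := Prod.mk.injEq .. ▸ hpv
      exact ⟨Vit_B Hne hb hB, ordOf_F b⟩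

theorem Vit_mem_SA (α : Ord1) (Hne : ∀ b : Ordinal, b < α.1 → (PreS P b).Nonempty) :
    ∀ b : Ordinal, b < α.1 → Vit P α ∈ SA P b := by
  intro b
  induction b using Ordinal.induction with
  | h b IH =>
    intro hb
    have hbω : b < ω₁ := hb.trans α.2
    rw [SA_eq b hbω]
    refine ⟨?_, ?_⟩
    · rcases eq_or_ne b 0 with rfl | h0
      · rw [PreS_zero]
        exact Vit_isModel α Hne
      · rw [PreS, if_neg h0]
        exact Set.mem_iInter.2 fun c => Set.mem_iInter.2 fun hc => IH c hc (hc.trans hb)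
    · exact Vit_sharp Hne (b := ⟨b, hbω⟩) hb

theorem topI_mem_models : (fun _ => TV.T O0) ∈ models P := by
  intro c hc
  exact TV.le_T0 _
/-- Every set `S_α` of the model intersection construction is non-empty. -/
theorem SA_nonempty (P : Program) (α : Ord1) : (SA P α.1).Nonempty := by
  suffices H : ∀ o : Ordinal, o < ω₁ → (SA P o).Nonempty from H α.1 α.2
  intro o
  induction o using Ordinal.induction with
  | h o IH =>
    intro ho
    have Hne : ∀ b : Ordinal, b < o → (PreS P b).Nonempty := by
      intro b hb
      obtain ⟨M, hM⟩ := IH b hb (hb.trans ho)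
      exact ⟨M, SA_subset_PreS b (hb.trans ho) hM⟩
    have HPo : (PreS P o).Nonempty := by
      rcases eq_or_ne o 0 with rfl | h0
      · rw [PreS_zero]
        exact ⟨fun _ => TV.T O0, topI_mem_models⟩
      · rw [PreS, if_neg h0]
        exact ⟨Vit P ⟨o, ho⟩, Set.mem_iInter.2 fun b => Set.mem_iInter.2 fun hb =>
          Vit_mem_SA ⟨o, ho⟩ Hne b hb⟩
    have ho1 : o + 1 < ω₁ := succ_lt_omega1 ho
    have Hne' : ∀ b : Ordinal, b < o + 1 → (PreS P b).Nonempty := by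
      intro b hb
      have hbo : b ≤ o := by
        rw [Ordinal.add_one_eq_succ] at hb
        exact Order.lt_succ_iff.1 hb
      rcases eq_or_lt_of_le hbo with rfl | hlt
      · exact HPo
      · exact Hne b hlt
    exact ⟨Vit P ⟨o + 1, ho1⟩, Vit_mem_SA ⟨o + 1, ho1⟩ Hne' o (ord_lt_add_one o)⟩

end IVS
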